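/- Let q > 0, b > 0, C > 0, and let B(x) = (C - |x|^q)_+^{1/b} on ℝⁿ satisfy ∫_{ℝⁿ} B dx = 1. Then ∫_{ℝⁿ} B(x)^{b+1} dx = (q(b+1)/(nb + q(b+1)))·C. -/

import Mathlib

open MeasureTheory Set Filter

lemma hphi {p : ℝ} (hp : 1 < p) (t : ℝ) :
    HasDerivAt (fun t : ℝ => max t 0 ^ p) (p * max t 0 ^ (p - 1)) t := by
  rcases lt_trichotomy t 0 with ht | rfl | ht
  · have hmax : max t 0 = 0 := max_eq_right ht.le
    have : p * max t 0 ^ (p - 1) = 0 := by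
      rw [hmax, Real.zero_rpow (by linarith), mul_zero]
    rw [this]
    refine (hasDerivAt_const t ((0:ℝ) ^ p)).congr_of_eventuallyEq ?_
    filter_upwards [Iio_mem_nhds ht] with y hy
    rw [max_eq_right (le_of_lt hy)]
  · have h0 : p * max (0:ℝ) 0 ^ (p - 1) = 0 := by
      rw [max_self, Real.zero_rpow (by linarith), mul_zero]
    rw [h0, hasDerivAt_iff_tendsto_slope]
    have hbound : ∀ᶠ y in nhdsWithin (0:ℝ) {(0:ℝ)}ᶜ,
        ‖slope (fun t : ℝ => max t 0 ^ p) 0 y‖ ≤ |y| ^ (p - 1) := by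
      filter_upwards with y
      rcases le_or_gt y 0 with hy | hy
      · have h1 : slope (fun t : ℝ => max t 0 ^ p) 0 y = 0 := by
          simp [slope_def_field, max_eq_right hy, max_self,
            Real.zero_rpow (by positivity : p ≠ 0)]
        rw [h1, norm_zero]
        exact Real.rpow_nonneg (abs_nonneg y) _
      · have h1 : slope (fun t : ℝ => max t 0 ^ p) 0 y = y ^ p / y := by
          simp [slope_def_field, max_eq_left hy.le, max_self,
            Real.zero_rpow (by positivity : p ≠ 0)]
        rw [h1, ← Real.rpow_sub_one hy.ne']
        rw [Real.norm_eq_abs, abs_of_pos (Real.rpow_pos_of_pos hy _), abs_of_pos hy]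
    have htend : Tendsto (fun t : ℝ => |t| ^ (p - 1))
        (nhdsWithin (0:ℝ) {(0:ℝ)}ᶜ) (nhds 0) := by
      have h1 : Tendsto (fun t : ℝ => |t|) (nhds (0:ℝ)) (nhds (|(0:ℝ)|)) :=
        continuous_abs.tendsto (0:ℝ)
      rw [abs_zero] at h1
      have h3 : Tendsto (fun x : ℝ => x ^ (p - 1)) (nhds 0) (nhds ((0:ℝ) ^ (p - 1))) :=
        (Real.continuousAt_rpow_const 0 (p - 1) (Or.inr (by linarith))).tendsto
      rw [Real.zero_rpow (by linarith)] at h3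
      exact (h3.comp h1).mono_left nhdsWithin_le_nhds
    exact squeeze_zero_norm' hbound htend
  · have h4 : p * max t 0 ^ (p - 1) = p * t ^ (p - 1) := by rw [max_eq_left ht.le]
    rw [h4]
    refine (Real.hasDerivAt_rpow_const (Or.inl ht.ne')).congr_of_eventuallyEq ?_
    filter_upwards [Ioi_mem_nhds ht] with y hy
    rw [max_eq_left (le_of_lt hy)]

lemma intHelper {f : ℝ → ℝ} (hf : Continuous f) {R : ℝ}
    (h0 : ∀ r, R ≤ r → f r = 0) : IntegrableOn f (Ioi (0:ℝ)) := by
  have h1 : IntegrableOn f (Ioc 0 R) :=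
    (hf.continuousOn.integrableOn_Icc).mono_set Ioc_subset_Icc_self
  have h2 : IntegrableOn f (Ioi R) :=
    (integrableOn_congr_fun (g := fun _ => (0:ℝ)) (fun r hr => h0 r (le_of_lt hr))
      measurableSet_Ioi).mpr (integrableOn_zero)
  refine (h1.union h2).mono_set fun x hx => ?_
  rcases le_or_gt x R with h | h
  · exact Or.inl ⟨hx, h⟩
  · exact Or.inr h

theorem stmt4 (n : ℕ) (hn : 1 ≤ n) (q b C : ℝ) (hq : 0 < q) (hb : 0 < b) (hC : 0 < C)
    (hmass : ∫ x : EuclideanSpace ℝ (Fin n), (max (C - ‖x‖ ^ q) 0) ^ (1 / b) = 1) :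
    ∫ x : EuclideanSpace ℝ (Fin n), ((max (C - ‖x‖ ^ q) 0) ^ (1 / b)) ^ (b + 1)
      = (q * (b + 1) / ((n : ℝ) * b + q * (b + 1))) * C := by
  have hb1 : (0:ℝ) < 1 / b := by positivity
  set p : ℝ := 1 + 1 / b with hp_def
  have hp : 1 < p := by rw [hp_def]; linarith
  have hpm : p - 1 = 1 / b := by rw [hp_def]; ring
  set s : ℝ → ℝ := fun r => max (C - r ^ q) 0 with hs_def
  -- continuity facts
  have crpow : ∀ e : ℝ, 0 < e → Continuous (fun t : ℝ => t ^ e) := fun e he =>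
    continuous_iff_continuousAt.2 fun t => Real.continuousAt_rpow_const t e (Or.inr he.le)
  have hs_cont : Continuous s := (continuous_const.sub (crpow q hq)).max continuous_const
  -- vanishing beyond R
  set R : ℝ := C ^ (1 / q) with hR_def
  have hRpos : 0 < R := Real.rpow_pos_of_pos hC _
  have hs0 : ∀ r, R ≤ r → s r = 0 := by
    intro r hr
    apply max_eq_right
    have h1 : R ^ q = C := by
      rw [hR_def, ← Real.rpow_mul hC.le, one_div_mul_cancel hq.ne', Real.rpow_one]
    have h2 : R ^ q ≤ r ^ q := Real.rpow_le_rpow hRpos.le hr hq.le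
    linarith
  -- the three radial integrands
  set g1 : ℝ → ℝ := fun r => r ^ (n - 1) * s r ^ (1 / b) with hg1_def
  set g2 : ℝ → ℝ := fun r => r ^ (n - 1) * s r ^ p with hg2_def
  set g3 : ℝ → ℝ := fun r => r ^ (n - 1) * (r ^ q * s r ^ (1 / b)) with hg3_def
  have hzr : ((0:ℝ) ^ (1/b) = 0 ∧ (0:ℝ) ^ p = 0) :=
    ⟨Real.zero_rpow hb1.ne', Real.zero_rpow (by linarith)⟩
  have hg1c : Continuous g1 := (continuous_pow _).mul ((crpow _ hb1).comp hs_cont)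
  have hg2c : Continuous g2 := (continuous_pow _).mul ((crpow _ (by linarith)).comp hs_cont)
  have hg3c : Continuous g3 :=
    (continuous_pow _).mul ((crpow q hq).mul ((crpow _ hb1).comp hs_cont))
  have hg1z : ∀ r, R ≤ r → g1 r = 0 := fun r hr => by
    show r ^ (n - 1) * s r ^ (1 / b) = 0
    rw [hs0 r hr, hzr.1, mul_zero]
  have hg2z : ∀ r, R ≤ r → g2 r = 0 := fun r hr => by
    show r ^ (n - 1) * s r ^ p = 0
    rw [hs0 r hr, hzr.2, mul_zero]
  have hg3z : ∀ r, R ≤ r → g3 r = 0 := fun r hr => by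
    show r ^ (n - 1) * (r ^ q * s r ^ (1 / b)) = 0
    rw [hs0 r hr, hzr.1, mul_zero, mul_zero]
  have hg1i : IntegrableOn g1 (Ioi (0:ℝ)) := intHelper hg1c hg1z
  have hg2i : IntegrableOn g2 (Ioi (0:ℝ)) := intHelper hg2c hg2z
  have hg3i : IntegrableOn g3 (Ioi (0:ℝ)) := intHelper hg3c hg3z
  -- FTC: ∫ (n*g2 - p*q*g3) over Ioi 0 = 0
  set F : ℝ → ℝ := fun r => r ^ n * s r ^ p with hF_def
  set h : ℝ → ℝ := fun r => (n : ℝ) * g2 r - p * q * g3 r with hh_def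
  have hderiv : ∀ r ∈ Ioi (0:ℝ), HasDerivAt F (h r) r := by
    intro r hr
    have hr0 : (0:ℝ) < r := hr
    have h1 : HasDerivAt (fun x : ℝ => C - x ^ q) (-(q * r ^ (q - 1))) r :=
      (Real.hasDerivAt_rpow_const (Or.inl hr0.ne')).const_sub C
    have h2 : HasDerivAt (fun x : ℝ => s x ^ p)
        (p * max (C - r ^ q) 0 ^ (p - 1) * -(q * r ^ (q - 1))) r :=
      by have := (hphi hp (C - r ^ q)).comp r h1; exact this
    have h3 := (hasDerivAt_pow n r).mul h2
    convert h3 using 1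
    case e'_4 => rfl
    case e'_5 => rfl
    case e'_8 => rfl
    have e1 : max (C - r ^ q) 0 ^ (p - 1) = s r ^ (1 / b) := by rw [hpm, hs_def]
    have e2 : r ^ (n - 1) * r ^ q = r ^ n * r ^ (q - 1) := by
      have : r ^ n = r ^ (n - 1) * r := by
        conv_lhs => rw [show n = (n - 1) + 1 from (Nat.succ_pred_eq_of_pos hn).symm]
        rw [pow_succ]
      rw [this, mul_assoc, ← Real.rpow_one_add' hr0.le (by linarith)]
      norm_num
    rw [hh_def]
    simp only [hg2_def, hg3_def, e1]
    rw [show (n:ℝ) * (r ^ (n-1) * s r ^ p) - p * q * (r ^ (n-1) * (r ^ q * s r ^ (1/b)))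
        = (n:ℝ) * r ^ (n-1) * s r ^ p - p * (r ^ (n-1) * r ^ q) * (s r ^ (1/b) * q) by ring,
      e2, hs_def]
    ring
  have hFcont : Continuous F := (continuous_pow n).mul ((crpow _ (by linarith)).comp hs_cont)
  have hFtop : Tendsto F atTop (nhds 0) := by
    refine Tendsto.congr' ?_ (tendsto_const_nhds (x := (0:ℝ)))
    filter_upwards [eventually_ge_atTop R] with r hr
    show (0:ℝ) = r ^ n * s r ^ p
    rw [hs0 r hr, hzr.2, mul_zero]
  have hhint : IntegrableOn h (Ioi (0:ℝ)) :=
    ((hg2i.const_mul _).sub (hg3i.const_mul _))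
  have hF0 : F 0 = 0 := by
    show (0:ℝ) ^ n * s 0 ^ p = 0
    rw [zero_pow (by omega : n ≠ 0), zero_mul]
  have hFTC : ∫ r in Ioi (0:ℝ), h r = 0 := by
    rw [integral_Ioi_of_hasDerivAt_of_tendsto hFcont.continuousWithinAt hderiv hhint hFtop, hF0,
      sub_zero]
  -- split the integral
  have hsplit : (n : ℝ) * ∫ r in Ioi (0:ℝ), g2 r = p * q * ∫ r in Ioi (0:ℝ), g3 r := by
    have := hFTC
    rw [hh_def] at this
    rw [integral_sub (hg2i.const_mul _) (hg3i.const_mul _), integral_const_mul,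
      integral_const_mul] at this
    linarith
  -- pointwise identity g2 = C*g1 - g3
  have hpt : ∀ r, g2 r = C * g1 r - g3 r := by
    intro r
    simp only [hg1_def, hg2_def, hg3_def, hs_def]
    rcases le_or_gt (C - r ^ q) 0 with hc | hc
    · rw [max_eq_right hc, hzr.1, hzr.2]; ring
    · rw [max_eq_left hc.le, hp_def, Real.rpow_add hc, Real.rpow_one]
      ring
  have hJ : ∫ r in Ioi (0:ℝ), g2 r
      = C * (∫ r in Ioi (0:ℝ), g1 r) - ∫ r in Ioi (0:ℝ), g3 r := by
    rw [show g2 = fun r => C * g1 r - g3 r from funext hpt,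
      integral_sub (hg1i.const_mul _) hg3i, integral_const_mul]
  -- radial reduction
  haveI : Nonempty (Fin n) := ⟨⟨0, hn⟩⟩
  have hdim : Module.finrank ℝ (EuclideanSpace ℝ (Fin n)) = n := finrank_euclideanSpace_fin
  haveI : Nontrivial (EuclideanSpace ℝ (Fin n)) := by
    apply Module.nontrivial_of_finrank_pos (R := ℝ)
    omega
  set V : ℝ := (volume (Metric.ball (0 : EuclideanSpace ℝ (Fin n)) 1)).toReal with hV_def
  have hrad1 : (1:ℝ) = n * (V * ∫ r in Ioi (0:ℝ), g1 r) := by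
    rw [← hmass, integral_fun_norm_addHaar volume (fun r => max (C - r ^ q) 0 ^ (1 / b)),
      hdim, nsmul_eq_mul, smul_eq_mul]
    congr 1
  have hrad2 : ∫ x : EuclideanSpace ℝ (Fin n), ((max (C - ‖x‖ ^ q) 0) ^ (1 / b)) ^ (b + 1)
      = n * (V * ∫ r in Ioi (0:ℝ), g2 r) := by
    rw [integral_fun_norm_addHaar volume
      (fun r => (max (C - r ^ q) 0 ^ (1 / b)) ^ (b + 1)), hdim, nsmul_eq_mul, smul_eq_mul]
    congr 1
    congr 1
    apply setIntegral_congr_fun measurableSet_Ioi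
    intro r _
    simp only [smul_eq_mul, hg2_def, hs_def]
    rw [← Real.rpow_mul (le_max_right _ _),
      show 1 / b * (b + 1) = p by rw [hp_def]; field_simp]
  -- final arithmetic
  rw [hrad2]
  set A : ℝ := ∫ r in Ioi (0:ℝ), g1 r
  set J : ℝ := ∫ r in Ioi (0:ℝ), g2 r
  set K : ℝ := ∫ r in Ioi (0:ℝ), g3 r
  have hn1 : (1:ℝ) ≤ (n:ℝ) := by exact_mod_cast hn
  have hd : (0:ℝ) < (n:ℝ) + p * q := by nlinarith
  have h1 : (n:ℝ) * J + p * q * J = p * q * C * A := by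
    linear_combination hsplit + p * q * hJ
  have key : (n:ℝ) * (V * J) * ((n:ℝ) + p * q) = p * q * C := by
    linear_combination ((n:ℝ) * V) * h1 - p * q * C * hrad1
  have h2 : (n:ℝ) * (V * J) = p * q * C / ((n:ℝ) + p * q) := by
    rw [eq_div_iff hd.ne']; exact key
  rw [h2, hp_def]
  have hden : (0:ℝ) < (n:ℝ) * b + q * (b + 1) := by nlinarith
  field_simp
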